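/- Let C, D be nonzero rationals and f(x,y) = Cx² + Dy². Then f has a rational periodic vector of type (L,L) if and only if there exist rational numbers m ≠ 0 and n such that CD = −(n² + 3)/(4m²). -/

import Mathlib

/-- `f = Cx² + Dy²` has a rational periodic vector of type `(L,L)` if and only if
`CD = −(n² + 3)/(4m²)` for some rationals `m ≠ 0`, `n`. -/
theorem type_LL_criterion (C D : ℚ) (hC : C ≠ 0) (hD : D ≠ 0) :
    (∃ x y : ℚ, C ^ 2 * x ^ 2 + C * x + C * D * y ^ 2 + 1 = 0) ↔
      ∃ m n : ℚ, m ≠ 0 ∧ C * D = -(n ^ 2 + 3) / (4 * m ^ 2) := by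
  constructor
  · rintro ⟨x, y, h⟩
    have hy : y ≠ 0 := by
      intro hy0
      subst hy0
      nlinarith [sq_nonneg (2 * C * x + 1)]
    refine ⟨y, 2 * C * x + 1, hy, ?_⟩
    field_simp
    linear_combination (4 : ℚ) * h
  · rintro ⟨m, n, hm, h⟩
    refine ⟨(n - 1) / (2 * C), m, ?_⟩
    field_simp at h ⊢
    linear_combination h
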